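/- Let e ≥ 2, n, d ∈ ℤ_{>0}, J = {1,…,e−1}, I = ℤ/eℤ. For j ∈ J let Inc(j) = {j, j−1} ⊆ I. Fix a colored composition (λ,c) with λ ∈ Λ(n,d) and c ∈ J^n, and b ∈ J^d. Let M(S,T) denote matrices with nonnegative integer entries indexed by S×T. Let L be the set of pairs (A,B) with A ∈ M(n,I), B ∈ M(I,d) such that: row sums of A are λ_1,…,λ_n; a_{r,i} = 0 unless i ∈ Inc(c_r); column sums of B are all 1; b_{i,s} = 0 unless i ∈ Inc(b_s); and for all i ∈ I, the i-th column sum of A equals the i-th row sum of B. Let R be the set of e-tuples (T^0,…,T^{e−1}) of matrices in M(n,d) such that T^0+⋯+T^{e−1} has row sums λ_1,…,λ_n and all column sums 1, and t^i_{r,s} = 0 unless i ∈ Inc(c_r) ∩ Inc(b_s). Then |R| = Σ_{(A,B)∈L} Π_{i∈I} multinomial(β_i(A); a_{1,i},…,a_{n,i}), where β_i(A) is the i-th column sum of A. -/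

import Mathlib

open Finset

lemma sum_eq_one_unique {α : Type*} [Fintype α] [DecidableEq α] (v : α → ℕ)
    (h : ∑ x, v x = 1) : ∃ x₀, v x₀ = 1 ∧ ∀ x, x ≠ x₀ → v x = 0 := by
  obtain ⟨x₀, -, hx₀⟩ := Finset.exists_ne_zero_of_sum_ne_zero (by simp [h] : ∑ x ∈ univ, v x ≠ 0)
  have h1 : v x₀ ≤ 1 := h ▸ Finset.single_le_sum (fun _ _ => Nat.zero_le _) (mem_univ x₀)
  have hv : v x₀ = 1 := le_antisymm h1 (Nat.one_le_iff_ne_zero.mpr hx₀)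
  refine ⟨x₀, hv, fun x hx => ?_⟩
  have hsplit := Finset.add_sum_erase univ v (mem_univ x₀)
  have h0 : ∑ y ∈ univ.erase x₀, v y = 0 := by omega
  exact (Finset.sum_eq_zero_iff).mp h0 x (Finset.mem_erase.mpr ⟨hx, mem_univ x⟩)

lemma count_aux {α κ : Type*} [Fintype α] [DecidableEq α] [Fintype κ] [DecidableEq κ]
    (a : κ → ℕ) (K : Finset κ) :
    ∀ S : Finset α, ∑ k ∈ K, a k = S.card →
      ((Finset.univ : Finset (α → Option κ)).filter fun h =>
          (∀ s, s ∉ S → h s = none) ∧ (∀ s ∈ S, ∃ k ∈ K, h s = some k) ∧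
          (∀ k ∈ K, (Finset.univ.filter fun s => h s = some k).card = a k)).card
        = Nat.multinomial K a := by
  induction K using Finset.induction with
  | empty =>
      intro S hS
      simp only [Finset.sum_empty] at hS
      have hS0 : S = ∅ := Finset.card_eq_zero.mp hS.symm
      subst hS0
      rw [Nat.multinomial_empty]
      have hset : ((Finset.univ : Finset (α → Option κ)).filter fun h =>
          (∀ s, s ∉ (∅ : Finset α) → h s = none) ∧ (∀ s ∈ (∅ : Finset α), ∃ k ∈ (∅ : Finset κ), h s = some k) ∧
          (∀ k ∈ (∅ : Finset κ), (Finset.univ.filter fun s => h s = some k).card = a k))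
          = {fun _ => none} := by
        ext h
        simp only [Finset.mem_filter, Finset.mem_univ, true_and, Finset.mem_singleton]
        constructor
        · rintro ⟨h1, -, -⟩
          funext s
          exact h1 s (by simp)
        · rintro rfl
          exact ⟨fun _ _ => rfl, fun s hs => absurd hs (by simp), fun k hk => absurd hk (by simp)⟩
      rw [hset, Finset.card_singleton]
  | @insert k₀ K' hk₀ IH =>
      intro S hS
      have hA : a k₀ + ∑ k ∈ K', a k = S.card := by rwa [Finset.sum_insert hk₀] at hS
      rw [Finset.card_eq_sum_card_fiberwise
        (f := fun h : α → Option κ => Finset.univ.filter fun s => h s = some k₀)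
        (t := S.powersetCard (a k₀)) ?hmaps]
      case hmaps =>
        intro h hh
        rw [Finset.mem_coe, Finset.mem_filter] at hh
        obtain ⟨-, h1, h2, h3⟩ := hh
        rw [Finset.mem_coe, Finset.mem_powersetCard]
        constructor
        · intro s hs
          rw [Finset.mem_filter] at hs
          by_contra hsS
          rw [h1 s hsS] at hs
          exact absurd hs.2 (by simp)
        · exact h3 k₀ (Finset.mem_insert_self _ _)
      have hfiber : ∀ T ∈ S.powersetCard (a k₀),
          (((Finset.univ : Finset (α → Option κ)).filter fun h =>
              (∀ s, s ∉ S → h s = none) ∧ (∀ s ∈ S, ∃ k ∈ insert k₀ K', h s = some k) ∧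
              (∀ k ∈ insert k₀ K', (Finset.univ.filter fun s => h s = some k).card = a k)).filter
            fun h => (Finset.univ.filter fun s => h s = some k₀) = T).card
          = Nat.multinomial K' a := by
        intro T hT
        obtain ⟨hTS, hTcard⟩ := Finset.mem_powersetCard.mp hT
        have hsum' : ∑ k ∈ K', a k = (S \ T).card := by
          rw [Finset.card_sdiff_of_subset hTS]
          omega
        rw [← IH (S \ T) hsum']
        refine Finset.card_bij' (fun h _ => fun s => if s ∈ T then none else h s)
          (fun h' _ => fun s => if s ∈ T then some k₀ else h' s) ?_ ?_ ?_ ?_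
        · -- hi
          intro h hh
          rw [Finset.mem_filter] at hh
          obtain ⟨hh0, hφ⟩ := hh
          rw [Finset.mem_filter] at hh0
          obtain ⟨-, h1, h2, h3⟩ := hh0
          have hmem : ∀ s, s ∈ T ↔ h s = some k₀ := by
            intro s; rw [← hφ]; simp
          rw [Finset.mem_filter]
          refine ⟨Finset.mem_univ _, ?_, ?_, ?_⟩
          · intro s hs
            by_cases hsT : s ∈ T
            · simp [hsT]
            · have hsS : s ∉ S := fun hsS => hs (Finset.mem_sdiff.mpr ⟨hsS, hsT⟩)
              simp [hsT, h1 s hsS]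
          · intro s hs
            obtain ⟨hsS, hsT⟩ := Finset.mem_sdiff.mp hs
            obtain ⟨k, hk, hks⟩ := h2 s hsS
            rcases Finset.mem_insert.mp hk with rfl | hkK'
            · exact absurd ((hmem s).mpr hks) hsT
            · exact ⟨k, hkK', by simp [hsT, hks]⟩
          · intro k hk
            have hkk₀ : k ≠ k₀ := fun e => hk₀ (e ▸ hk)
            have hflt : (Finset.univ.filter fun s => (if s ∈ T then none else h s) = some k)
                = Finset.univ.filter fun s => h s = some k := by
              ext s
              simp only [Finset.mem_filter, Finset.mem_univ, true_and]
              by_cases hsT : s ∈ T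
              · rw [if_pos hsT, (hmem s).mp hsT]
                simp [hkk₀.symm]
              · rw [if_neg hsT]
            rw [hflt]
            exact h3 k (Finset.mem_insert_of_mem hk)
        · -- hj
          intro h' hh'
          rw [Finset.mem_filter] at hh'
          obtain ⟨-, h1', h2', h3'⟩ := hh'
          have hno : ∀ s, h' s ≠ some k₀ := by
            intro s hs
            by_cases hsd : s ∈ S \ T
            · obtain ⟨k, hk, hks⟩ := h2' s hsd
              rw [hs] at hks
              exact hk₀ ((Option.some.inj hks) ▸ hk)
            · rw [h1' s hsd] at hs
              exact absurd hs (by simp)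
          have hφ' : (Finset.univ.filter fun s => (if s ∈ T then some k₀ else h' s) = some k₀) = T := by
            ext s
            simp only [Finset.mem_filter, Finset.mem_univ, true_and]
            by_cases hsT : s ∈ T
            · simp [hsT]
            · simp [hsT, hno s]
          rw [Finset.mem_filter, Finset.mem_filter]
          refine ⟨⟨Finset.mem_univ _, ?_, ?_, ?_⟩, hφ'⟩
          · intro s hs
            have hsT : s ∉ T := fun h => hs (hTS h)
            have hsd : s ∉ S \ T := fun h => hs (Finset.mem_sdiff.mp h).1
            simp [hsT, h1' s hsd]
          · intro s hs
            by_cases hsT : s ∈ T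
            · exact ⟨k₀, Finset.mem_insert_self _ _, by simp [hsT]⟩
            · obtain ⟨k, hk, hks⟩ := h2' s (Finset.mem_sdiff.mpr ⟨hs, hsT⟩)
              exact ⟨k, Finset.mem_insert_of_mem hk, by simp [hsT, hks]⟩
          · intro k hk
            rcases Finset.mem_insert.mp hk with rfl | hkK'
            · rw [hφ', hTcard]
            · have hkk₀ : k ≠ k₀ := fun e => hk₀ (e ▸ hkK')
              have hflt : (Finset.univ.filter fun s => (if s ∈ T then some k₀ else h' s) = some k)
                  = Finset.univ.filter fun s => h' s = some k := by
                ext s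
                simp only [Finset.mem_filter, Finset.mem_univ, true_and]
                by_cases hsT : s ∈ T
                · have hsd : s ∉ S \ T := fun hh => (Finset.mem_sdiff.mp hh).2 hsT
                  simp [hsT, hkk₀.symm, h1' s hsd]
                · rw [if_neg hsT]
              rw [hflt]
              exact h3' k hkK'
        · -- left_inv
          intro h hh
          rw [Finset.mem_filter] at hh
          have hφ := hh.2
          have hmem : ∀ s, s ∈ T ↔ h s = some k₀ := by
            intro s; rw [← hφ]; simp
          funext s
          by_cases hsT : s ∈ T
          · simp [hsT, ((hmem s).mp hsT).symm]
          · simp [hsT]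
        · -- right_inv
          intro h' hh'
          rw [Finset.mem_filter] at hh'
          obtain ⟨-, h1', -, -⟩ := hh'
          funext s
          by_cases hsT : s ∈ T
          · have hsd : s ∉ S \ T := fun h => (Finset.mem_sdiff.mp h).2 hsT
            simp [hsT, (h1' s hsd).symm]
          · simp [hsT]
      rw [Finset.sum_congr rfl hfiber, Finset.sum_const, smul_eq_mul,
        Finset.card_powersetCard, Nat.multinomial_insert hk₀, hA]

lemma count_funs {α κ : Type*} [Fintype α] [DecidableEq α] [Fintype κ] [DecidableEq κ] [Nonempty κ]
    (a : κ → ℕ) (hsum : ∑ k, a k = Fintype.card α) :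
    ((Finset.univ : Finset (α → κ)).filter fun h =>
        ∀ k, (Finset.univ.filter fun s => h s = k).card = a k).card
      = Nat.multinomial Finset.univ a := by
  rw [← count_aux a Finset.univ Finset.univ (by simpa using hsum)]
  refine Finset.card_bij' (fun h _ => fun s => some (h s))
    (fun h' _ => fun s => (h' s).getD (Classical.arbitrary κ)) ?_ ?_ ?_ ?_
  · intro h hh
    rw [Finset.mem_filter] at hh ⊢
    refine ⟨Finset.mem_univ _, fun s hs => absurd (Finset.mem_univ s) hs,
      fun s _ => ⟨h s, Finset.mem_univ _, rfl⟩, fun k _ => ?_⟩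
    simpa using hh.2 k
  · intro h' hh'
    rw [Finset.mem_filter] at hh'
    obtain ⟨-, -, h2, h3⟩ := hh'
    rw [Finset.mem_filter]
    refine ⟨Finset.mem_univ _, fun k => ?_⟩
    have hflt : (Finset.univ.filter fun s => (h' s).getD (Classical.arbitrary κ) = k)
        = Finset.univ.filter fun s => h' s = some k := by
      ext s
      obtain ⟨k', -, hk'⟩ := h2 s (Finset.mem_univ s)
      simp [hk']
    rw [hflt]
    exact h3 k (Finset.mem_univ k)
  · intro h _
    funext s
    rfl
  · intro h' hh'
    rw [Finset.mem_filter] at hh'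
    obtain ⟨-, -, h2, -⟩ := hh'
    funext s
    obtain ⟨k', -, hk'⟩ := h2 s (Finset.mem_univ s)
    simp [hk']

lemma card_subtype_filter {α ι : Type*} [Fintype α] [DecidableEq α] [DecidableEq ι]
    (g : α → ι) (i : ι) (p : α → Prop) [DecidablePred p] :
    ((Finset.univ : Finset {s // g s = i}).filter fun x : {s // g s = i} => p ↑x).card
      = (Finset.univ.filter fun s : α => g s = i ∧ p s).card := by
  refine Finset.card_bij' (fun x _ => (x : α)) (fun s hs => ⟨s, (Finset.mem_filter.mp hs).2.1⟩)
    ?_ ?_ ?_ ?_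
  · intro x hx
    simp only [Finset.mem_filter, Finset.mem_univ, true_and] at hx ⊢
    exact ⟨x.2, hx⟩
  · intro s hs
    simp only [Finset.mem_filter, Finset.mem_univ, true_and] at hs ⊢
    exact hs.2
  · intro x _
    rfl
  · intro s _
    rfl

lemma count_funs_fiber {α ι κ : Type*} [Fintype α] [DecidableEq α] [Fintype ι] [DecidableEq ι]
    [Fintype κ] [DecidableEq κ] [Nonempty κ]
    (g : α → ι) (A : ι → κ → ℕ)
    (hA : ∀ i, ∑ k, A i k = (Finset.univ.filter fun s => g s = i).card) :
    ((Finset.univ : Finset (α → κ)).filter fun h =>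
        ∀ i k, (Finset.univ.filter fun s => g s = i ∧ h s = k).card = A i k).card
      = ∏ i, Nat.multinomial Finset.univ (A i) := by
  have hkey : ∀ (p : ∀ i, {s // g s = i} → κ) (i : ι) (x : {s // g s = i}),
      p (g ↑x) ⟨↑x, rfl⟩ = p i x := by
    rintro p i ⟨s, rfl⟩
    rfl
  have hper : ∀ i, ((Finset.univ : Finset ({s // g s = i} → κ)).filter fun q =>
      ∀ k, (Finset.univ.filter fun x => q x = k).card = A i k).card
      = Nat.multinomial Finset.univ (A i) := by
    intro i
    refine count_funs (A i) ?_
    rw [Fintype.card_subtype]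
    exact hA i
  calc ((Finset.univ : Finset (α → κ)).filter fun h =>
        ∀ i k, (Finset.univ.filter fun s => g s = i ∧ h s = k).card = A i k).card
      = (Fintype.piFinset fun i => ((Finset.univ : Finset ({s // g s = i} → κ)).filter fun q =>
          ∀ k, (Finset.univ.filter fun x => q x = k).card = A i k)).card := by
        refine Finset.card_bij' (fun h _ => fun i (x : {s // g s = i}) => h ↑x)
          (fun p _ => fun s => p (g s) ⟨s, rfl⟩) ?_ ?_ ?_ ?_
        · intro h hh
          rw [Finset.mem_filter] at hh
          rw [Fintype.mem_piFinset]
          intro i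
          rw [Finset.mem_filter]
          refine ⟨Finset.mem_univ _, fun k => ?_⟩
          rw [card_subtype_filter g i (fun s => h s = k)]
          exact hh.2 i k
        · intro p hp
          rw [Fintype.mem_piFinset] at hp
          rw [Finset.mem_filter]
          refine ⟨Finset.mem_univ _, fun i k => ?_⟩
          have h1 : (Finset.univ.filter fun s => g s = i ∧ p (g s) ⟨s, rfl⟩ = k)
              = Finset.univ.filter fun s => g s = i ∧ (fun s => p (g s) ⟨s, rfl⟩) s = k := rfl
          rw [h1, ← card_subtype_filter g i (fun s => (fun s => p (g s) ⟨s, rfl⟩) s = k)]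
          have h2 : ((Finset.univ : Finset {s // g s = i}).filter
              fun x : {s // g s = i} => p (g ↑x) ⟨↑x, rfl⟩ = k)
              = (Finset.univ : Finset {s // g s = i}).filter fun x : {s // g s = i} => p i x = k := by
            apply Finset.filter_congr
            intro x _
            rw [hkey p i x]
          rw [h2]
          have := (Finset.mem_filter.mp (hp i)).2
          exact this k
        · intro h _
          funext s
          rfl
        · intro p _
          funext i
          funext x
          exact hkey p i x
    _ = ∏ i, ((Finset.univ : Finset ({s // g s = i} → κ)).filter fun q =>
          ∀ k, (Finset.univ.filter fun x => q x = k).card = A i k).card :=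
        Fintype.card_piFinset _
    _ = ∏ i, Nat.multinomial Finset.univ (A i) := Finset.prod_congr rfl fun i _ => hper i

/-- For `j ∈ J = {1,…,e-1}`, the set `Inc(j) = {j, j-1} ⊆ I`. -/
def IncN (j : ℕ) : Finset ℕ := {j, j - 1}

/-- The count `|R|` of `e`-tuples of matrices equals the sum
over compatible pairs `(A,B)` of products of multinomial coefficients
`|𝔖_{β_i(A)} : 𝔖_{A,i}|`. -/
theorem matrix_tuple_count
    (e n d : ℕ) (he : 2 ≤ e) (hn : 1 ≤ n) (hd : 1 ≤ d)
    (lam : Fin n → ℕ) (hlam : ∑ r, lam r = d)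
    (c : Fin n → ℕ) (hc : ∀ r, 1 ≤ c r ∧ c r ≤ e - 1)
    (b : Fin d → ℕ) (hb : ∀ s, 1 ≤ b s ∧ b s ≤ e - 1)
    (L : Set ((Fin n → Fin e → ℕ) × (Fin e → Fin d → ℕ)))
    (hL : L = {AB | (∀ r, ∑ i, AB.1 r i = lam r) ∧
                    (∀ r, ∀ i : Fin e, (i : ℕ) ∉ IncN (c r) → AB.1 r i = 0) ∧
                    (∀ s, ∑ i, AB.2 i s = 1) ∧
                    (∀ (i : Fin e) s, (i : ℕ) ∉ IncN (b s) → AB.2 i s = 0) ∧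
                    (∀ i, ∑ r, AB.1 r i = ∑ s, AB.2 i s)})
    (R : Set (Fin e → Fin n → Fin d → ℕ))
    (hR : R = {T | (∀ r, ∑ s, ∑ i, T i r s = lam r) ∧
                   (∀ s, ∑ r, ∑ i, T i r s = 1) ∧
                   (∀ (i : Fin e) r s, ¬((i : ℕ) ∈ IncN (c r) ∧ (i : ℕ) ∈ IncN (b s)) →
                     T i r s = 0)}) :
    R.ncard =
      ∑ᶠ AB ∈ L, ∏ i : Fin e, Nat.multinomial Finset.univ (fun r => AB.1 r i) := by
  have hnκ : Nonempty (Fin n) := ⟨⟨0, hn⟩⟩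
  -- indicator sums over pairs
  have hsumi : ∀ (q : Fin e × Fin n) (r : Fin n),
      (∑ i : Fin e, if q = (i, r) then 1 else 0) = if q.2 = r then 1 else 0 := by
    intro q r
    by_cases hr : q.2 = r
    · simp [Prod.ext_iff, hr]
    · simp [Prod.ext_iff, hr]
  -- the finset F of functions
  set F : Finset (Fin d → Fin e × Fin n) := Finset.univ.filter fun f =>
    (∀ r, (Finset.univ.filter fun s => (f s).2 = r).card = lam r) ∧
    (∀ s, ((f s).1 : ℕ) ∈ IncN (c (f s).2) ∧ ((f s).1 : ℕ) ∈ IncN (b s)) with hF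
  set Φ : (Fin d → Fin e × Fin n) → (Fin e → Fin n → Fin d → ℕ) :=
    fun f i r s => if f s = (i, r) then 1 else 0 with hΦ
  have hΦinj : Function.Injective Φ := by
    intro f f' hff
    funext s
    have h1 : Φ f (f s).1 (f s).2 s = 1 := by simp [hΦ]
    rw [hff] at h1
    simp only [hΦ] at h1
    by_cases hcond : f' s = ((f s).1, (f s).2)
    · rw [hcond]
    · rw [if_neg hcond] at h1
      exact absurd h1 (by norm_num)
  have hRF : R = Φ '' (F : Set (Fin d → Fin e × Fin n)) := by
    subst hR
    ext T
    constructor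
    · rintro ⟨hT1, hT2, hT3⟩
      have hex : ∀ s, ∃ p : Fin e × Fin n, T p.1 p.2 s = 1 ∧ ∀ q, q ≠ p → T q.1 q.2 s = 0 := by
        intro s
        refine sum_eq_one_unique (fun p : Fin e × Fin n => T p.1 p.2 s) ?_
        rw [Fintype.sum_prod_type]
        rw [Finset.sum_comm]
        exact hT2 s
      choose f hf1 hf2 using hex
      have hTf : ∀ i r s, T i r s = if f s = (i, r) then 1 else 0 := by
        intro i r s
        by_cases hc' : f s = (i, r)
        · rw [if_pos hc']
          have := hf1 s
          rw [hc'] at this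
          exact this
        · rw [if_neg hc']
          exact hf2 s (i, r) (fun h => hc' h.symm)
      refine ⟨f, ?_, ?_⟩
      · rw [Finset.mem_coe, hF, Finset.mem_filter]
        refine ⟨Finset.mem_univ _, fun r => ?_, fun s => ?_⟩
        · rw [← hT1 r, Finset.card_filter]
          refine Finset.sum_congr rfl fun s _ => ?_
          rw [show (∑ i, T i r s) = ∑ i, if f s = (i, r) then 1 else 0 from
            Finset.sum_congr rfl fun i _ => hTf i r s, hsumi (f s) r]
        · by_contra hcon
          have h0 := hT3 (f s).1 (f s).2 s hcon
          rw [hf1 s] at h0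
          exact absurd h0 (by norm_num)
      · funext i r s
        rw [hTf i r s]
    · rintro ⟨f, hfF, rfl⟩
      rw [Finset.mem_coe, hF, Finset.mem_filter] at hfF
      obtain ⟨-, hrow, hinc⟩ := hfF
      refine ⟨fun r => ?_, fun s => ?_, fun i r s hcon => ?_⟩
      · rw [← hrow r, Finset.card_filter]
        exact Finset.sum_congr rfl fun s _ => hsumi (f s) r
      · calc ∑ r, ∑ i, Φ f i r s = ∑ r : Fin n, if (f s).2 = r then 1 else 0 :=
              Finset.sum_congr rfl fun r _ => hsumi (f s) r
          _ = 1 := by simp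
      · by_cases hc' : f s = (i, r)
        · exfalso
          apply hcon
          have := hinc s
          rw [hc'] at this
          exact this
        · simp [hΦ, hc']
  have hcard : R.ncard = F.card := by
    rw [hRF, Set.ncard_image_of_injective _ hΦinj, Set.ncard_coe_finset]
  -- L is finite
  have hLfin : L.Finite := by
    apply Set.Finite.of_finite_image (f := fun AB : (Fin n → Fin e → ℕ) × (Fin e → Fin d → ℕ) =>
      ((fun r i => ⟨min (AB.1 r i) d, by omega⟩, fun i s => ⟨min (AB.2 i s) 1, by omega⟩) :
        (Fin n → Fin e → Fin (d+1)) × (Fin e → Fin d → Fin 2)))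
      (Set.toFinite _)
    intro AB hAB AB' hAB' heq
    rw [hL] at hAB hAB'
    obtain ⟨h1, -, h3, -, -⟩ := hAB
    obtain ⟨h1', -, h3', -, -⟩ := hAB'
    have hbd : ∀ (A : Fin n → Fin e → ℕ), (∀ r, ∑ i, A r i = lam r) → ∀ r i, A r i ≤ d := by
      intro A hA r i
      calc A r i ≤ ∑ i', A r i' := Finset.single_le_sum (fun _ _ => Nat.zero_le _) (mem_univ i)
        _ = lam r := hA r
        _ ≤ ∑ r', lam r' := Finset.single_le_sum (fun _ _ => Nat.zero_le _) (mem_univ r)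
        _ = d := hlam
    have hbd2 : ∀ (B : Fin e → Fin d → ℕ), (∀ s, ∑ i, B i s = 1) → ∀ i s, B i s ≤ 1 := by
      intro B hB i s
      calc B i s ≤ ∑ i', B i' s :=
            Finset.single_le_sum (f := fun i' => B i' s) (fun _ _ => Nat.zero_le _) (mem_univ i)
        _ = 1 := hB s
    have heq1 := congrArg Prod.fst heq
    have heq2 := congrArg Prod.snd heq
    simp only at heq1 heq2
    refine Prod.ext ?_ ?_
    · funext r i
      have := congrFun (congrFun heq1 r) i
      have hv := congrArg Fin.val this
      simp only at hv
      have b1 := hbd AB.1 h1 r i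
      have b2 := hbd AB'.1 h1' r i
      omega
    · funext i s
      have := congrFun (congrFun heq2 i) s
      have hv := congrArg Fin.val this
      simp only at hv
      have b1 := hbd2 AB.2 h3 i s
      have b2 := hbd2 AB'.2 h3' i s
      omega
  rw [hcard, ← Set.Finite.coe_toFinset hLfin, finsum_mem_coe_finset]
  -- the projection map
  set π : (Fin d → Fin e × Fin n) → ((Fin n → Fin e → ℕ) × (Fin e → Fin d → ℕ)) := fun f =>
    (fun r i => (Finset.univ.filter fun s => f s = (i, r)).card,
     fun i s => if (f s).1 = i then 1 else 0) with hπ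
  -- splitting counts
  have hsplit1 : ∀ (f : Fin d → Fin e × Fin n) (r : Fin n),
      (Finset.univ.filter fun s => (f s).2 = r).card
        = ∑ i, (Finset.univ.filter fun s => f s = (i, r)).card := by
    intro f r
    rw [Finset.card_eq_sum_card_fiberwise (f := fun s => (f s).1)
      (t := (Finset.univ : Finset (Fin e))) (fun _ _ => Finset.mem_univ _)]
    refine Finset.sum_congr rfl fun i _ => ?_
    rw [Finset.filter_filter]
    congr 1
    ext s
    simp [Prod.ext_iff, and_comm]
  have hsplit2 : ∀ (f : Fin d → Fin e × Fin n) (i : Fin e),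
      (Finset.univ.filter fun s => (f s).1 = i).card
        = ∑ r, (Finset.univ.filter fun s => f s = (i, r)).card := by
    intro f i
    rw [Finset.card_eq_sum_card_fiberwise (f := fun s => (f s).2)
      (t := (Finset.univ : Finset (Fin n))) (fun _ _ => Finset.mem_univ _)]
    refine Finset.sum_congr rfl fun r _ => ?_
    rw [Finset.filter_filter]
    congr 1
    ext s
    simp [Prod.ext_iff]
  have hmaps : ∀ f ∈ F, π f ∈ hLfin.toFinset := by
    intro f hf
    rw [hF, Finset.mem_filter] at hf
    obtain ⟨-, hrow, hinc⟩ := hf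
    rw [Set.Finite.mem_toFinset, hL]
    refine ⟨fun r => ?_, fun r i hi => ?_, fun s => ?_, fun i s hi => ?_, fun i => ?_⟩
    · rw [hπ]
      rw [← hsplit1 f r]
      exact hrow r
    · rw [hπ]
      simp only
      rw [Finset.card_eq_zero, Finset.filter_eq_empty_iff]
      intro s _
      intro hfs
      apply hi
      have := (hinc s).1
      rw [hfs] at this
      exact this
    · rw [hπ]
      simp
    · rw [hπ]
      simp only
      rw [if_neg]
      intro hfi
      apply hi
      have := (hinc s).2
      rw [hfi] at this
      exact this
    · rw [hπ]
      simp only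
      rw [← hsplit2 f i, Finset.card_filter]
  rw [Finset.card_eq_sum_card_fiberwise hmaps]
  refine Finset.sum_congr rfl fun AB hAB => ?_
  rw [Set.Finite.mem_toFinset, hL] at hAB
  obtain ⟨hA1, hA2, hA3, hA4, hA5⟩ := hAB
  have hgex : ∀ s, ∃ i₀, AB.2 i₀ s = 1 ∧ ∀ i, i ≠ i₀ → AB.2 i s = 0 :=
    fun s => sum_eq_one_unique _ (hA3 s)
  choose g hg1 hg2 using hgex
  have hBg : ∀ i s, AB.2 i s = if g s = i then 1 else 0 := by
    intro i s
    by_cases h : g s = i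
    · rw [if_pos h, ← h]
      exact hg1 s
    · rw [if_neg h]
      exact hg2 s i (fun h' => h h'.symm)
  have hAcount : ∀ i, ∑ r, AB.1 r i = (Finset.univ.filter fun s => g s = i).card := by
    intro i
    rw [hA5 i, Finset.card_filter]
    exact Finset.sum_congr rfl fun s _ => hBg i s
  rw [← count_funs_fiber g (fun i r => AB.1 r i) hAcount]
  -- first components agree with g on the fiber
  have hfst : ∀ f, π f = AB → ∀ s, (f s).1 = g s := by
    intro f hπf s
    have h2 : (π f).2 = AB.2 := congrArg Prod.snd hπf
    have hfs : AB.2 ((f s).1) s = 1 := by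
      rw [← h2, hπ]
      simp
    by_contra hne
    rw [hg2 s _ hne] at hfs
    exact absurd hfs (by norm_num)
  refine Finset.card_bij' (fun f _ => fun s => (f s).2) (fun h _ => fun s => (g s, h s)) ?_ ?_ ?_ ?_
  · intro f hf
    rw [Finset.mem_filter] at hf
    obtain ⟨hfF, hπf⟩ := hf
    simp only [Finset.mem_filter, Finset.mem_univ, true_and]
    intro i r
    have h1 : (π f).1 = AB.1 := congrArg Prod.fst hπf
    have h1' := congrFun (congrFun h1 r) i
    rw [hπ] at h1'
    simp only at h1'
    rw [← h1']
    congr 1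
    ext s
    simp only [Finset.mem_filter, Finset.mem_univ, true_and, Prod.ext_iff]
    rw [← hfst f hπf s]
  · intro h hh
    simp only [Finset.mem_filter, Finset.mem_univ, true_and] at hh
    have hcount := hh
    rw [Finset.mem_filter]
    refine ⟨?_, ?_⟩
    · rw [hF, Finset.mem_filter]
      refine ⟨Finset.mem_univ _, fun r => ?_, fun s => ?_⟩
      · rw [← hA1 r, Finset.card_eq_sum_card_fiberwise (f := fun s => g s)
          (t := (Finset.univ : Finset (Fin e))) (fun _ _ => Finset.mem_univ _)]
        refine Finset.sum_congr rfl fun i _ => ?_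
        rw [Finset.filter_filter, ← hcount i r]
        congr 1
        ext s
        simp [and_comm]
      · constructor
        · by_contra hni
          have hzero := hA2 (h s) (g s) hni
          have hmem : s ∈ Finset.univ.filter fun s' => g s' = g s ∧ h s' = h s := by
            simp
          have hne := Finset.card_ne_zero_of_mem hmem
          rw [hcount (g s) (h s)] at hne
          exact hne hzero
        · by_contra hni
          have hzero := hA4 (g s) s hni
          rw [hg1 s] at hzero
          exact absurd hzero (by norm_num)
    · refine Prod.ext ?_ ?_
      · rw [hπ]
        funext r i
        simp only
        rw [← hcount i r]
        congr 1
        ext s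
        simp [Prod.ext_iff]
      · rw [hπ]
        funext i s
        simp only
        exact (hBg i s).symm
  · intro f hf
    rw [Finset.mem_filter] at hf
    funext s
    show (g s, (f s).2) = f s
    rw [← hfst f hf.2 s]
  · intro h _
    funext s
    rfl
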